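/- The number of weighted Motzkin paths of length n with up-step weight 1, horizontal-step weights b_0 = 1 and b_k = 2 for k ≥ 1, and down-step weights λ_k = 1 for all k ≥ 1, equals the Catalan number C_n. -/

import Mathlib

open Finset

/-- Steps for Schröder paths: `U = (1,1)`, `D = (1,-1)`, `H = (2,0)`. -/
inductive SStep | U | D | H
deriving DecidableEq

/-- The total horizontal length of a Schröder path. -/
def xlen (l : List SStep) : ℕ :=
  (l.map (fun s => match s with | .H => 2 | _ => 1)).sum

/-- The final height of a Schröder path. -/
def sht (l : List SStep) : ℤ :=
  (l.map (fun s => match s with | .U => 1 | .D => -1 | .H => 0)).sum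

/-- A little Schröder path of length `2n`: from `(0,0)` to `(2n,0)` with steps
`(1,1)`, `(1,-1)`, `(2,0)`, never below the x-axis, no `(2,0)` step on the x-axis. -/
def IsLittleSchroederPath (n : ℕ) (l : List SStep) : Prop :=
  xlen l = 2 * n ∧ sht l = 0 ∧ (∀ p, p <+: l → 0 ≤ sht p) ∧
  ∀ p, p ++ [SStep.H] <+: l → 0 < sht p

/-- The `n`-th little Schröder number (A001003), as the number of little
Schröder paths of length `2n`. -/
noncomputable def littleSchroeder (n : ℕ) : ℕ :=
  Set.ncard {l : List SStep | IsLittleSchroederPath n l}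

/-- Steps for Motzkin paths. -/
inductive MStep | up | down | flat
deriving DecidableEq

instance : Fintype MStep :=
  ⟨{MStep.up, MStep.down, MStep.flat}, fun x => by cases x <;> simp⟩

/-- The height of a Motzkin path `f` of length `m` after `i` steps. -/
def mht {m : ℕ} (f : Fin m → MStep) (i : ℕ) : ℤ :=
  ∑ j : Fin m, if (j : ℕ) < i then
    (match f j with | .up => 1 | .down => -1 | .flat => 0) else 0

/-- `f` is a Motzkin path: it stays weakly above the x-axis and ends at height 0. -/
def IsMotzkinPath {m : ℕ} (f : Fin m → MStep) : Prop :=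
  (∀ i, 0 ≤ mht f i) ∧ mht f m = 0

/-- The `n`-th Motzkin number, as the number of Motzkin paths of length `n`. -/
noncomputable def motzkin (n : ℕ) : ℕ :=
  Set.ncard {f : Fin n → MStep | IsMotzkinPath f}

/-- The weight of the path `f`, where up steps have weight 1, a horizontal step
at height `h` has weight `b h`, and a down step starting at height `h` has
weight `lam h`. -/
def mweight {m : ℕ} (b lam : ℕ → ℕ) (f : Fin m → MStep) : ℕ :=
  ∏ j : Fin m, match f j with
    | .up => 1
    | .flat => b (mht f (j : ℕ)).toNat
    | .down => lam (mht f (j : ℕ)).toNat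

open Classical in
/-- The total weight of all weighted Motzkin paths of length `m`
(the `m`-th moment for the recurrence coefficients `b`, `lam`). -/
noncomputable def moment (b lam : ℕ → ℕ) (m : ℕ) : ℕ :=
  ∑ f ∈ Finset.univ.filter (fun f : Fin m → MStep => IsMotzkinPath f),
    mweight b lam f

open Classical in
/-- The total weight of all weighted Dyck paths (Motzkin paths with no
horizontal steps) of length `m`, where a down step starting at height `h` has
weight `lam h`. -/
noncomputable def dyckMoment (lam : ℕ → ℕ) (m : ℕ) : ℕ :=
  ∑ f ∈ Finset.univ.filter
      (fun f : Fin m → MStep => IsMotzkinPath f ∧ ∀ j, f j ≠ MStep.flat),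
    mweight (fun _ => 1) lam f

section MotzkinAux

open Finset


def sval : MStep → ℤ
  | .up => 1
  | .down => -1
  | .flat => 0

lemma mht_eq {m : ℕ} (f : Fin m → MStep) (i : ℕ) :
    mht f i = ∑ j : Fin m, if (j : ℕ) < i then sval (f j) else 0 := by
  unfold mht; refine Finset.sum_congr rfl fun j _ => ?_
  cases h : f j <;> simp [h, sval]

lemma mht_stable {m : ℕ} (f : Fin m → MStep) {i : ℕ} (h : m ≤ i) :
    mht f i = mht f m := by
  rw [mht_eq, mht_eq]
  refine Finset.sum_congr rfl fun j _ => ?_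
  rw [if_pos (lt_of_lt_of_le j.isLt h), if_pos j.isLt]

lemma mht_snoc_le {n : ℕ} (g : Fin n → MStep) (s : MStep) {i : ℕ} (h : i ≤ n) :
    mht (Fin.snoc g s) i = mht g i := by
  rw [mht_eq, mht_eq, Fin.sum_univ_castSucc]
  simp only [Fin.coe_castSucc, Fin.snoc_castSucc, Fin.val_last]
  rw [if_neg (by omega)]
  simp

lemma mht_snoc_top {n : ℕ} (g : Fin n → MStep) (s : MStep) :
    mht (Fin.snoc g s) (n + 1) = mht g n + sval s := by
  rw [mht_eq, mht_eq (f := g), Fin.sum_univ_castSucc]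
  simp only [Fin.coe_castSucc, Fin.snoc_castSucc, Fin.val_last, Fin.snoc_last]
  rw [if_pos (by omega)]
  congr 1
  refine Finset.sum_congr rfl fun j _ => ?_
  rw [if_pos (by omega), if_pos j.isLt]

lemma mweight_snoc {n : ℕ} (b lam : ℕ → ℕ) (g : Fin n → MStep) (s : MStep) :
    mweight b lam (Fin.snoc g s) = mweight b lam g *
      (match s with
        | .up => 1
        | .flat => b (mht g n).toNat
        | .down => lam (mht g n).toNat) := by
  unfold mweight
  rw [Fin.prod_univ_castSucc]
  congr 1
  · refine Finset.prod_congr rfl fun j _ => ?_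
    have hh : mht (Fin.snoc g s) (j : ℕ) = mht g j := mht_snoc_le g s (le_of_lt j.isLt)
    cases h : g j <;> simp [h, hh, Fin.snoc_castSucc, Fin.coe_castSucc]
  · have hh : mht (Fin.snoc g s) n = mht g n := mht_snoc_le g s (le_refl n)
    cases s <;> simp [hh, Fin.snoc_last, Fin.val_last]

lemma nonneg_snoc_iff {n : ℕ} (g : Fin n → MStep) (s : MStep) :
    (∀ i, 0 ≤ mht (Fin.snoc g s) i) ↔
      (∀ i, 0 ≤ mht g i) ∧ 0 ≤ mht g n + sval s := by
  constructor
  · intro h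
    refine ⟨fun i => ?_, ?_⟩
    · rcases le_or_gt i n with hi | hi
      · rw [← mht_snoc_le g s hi]; exact h i
      · rw [mht_stable g (le_of_lt hi), ← mht_snoc_le g s (le_refl n)]; exact h n
    · rw [← mht_snoc_top]; exact h (n+1)
  · rintro ⟨h1, h2⟩ i
    rcases le_or_gt i n with hi | hi
    · rw [mht_snoc_le g s hi]; exact h1 i
    · rw [mht_stable _ (show n+1 ≤ i by omega), mht_snoc_top]; exact h2

def B : ℕ → ℕ := fun k => if k = 0 then 1 else 2

open Classical in
noncomputable def mu (n k : ℕ) : ℕ :=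
  ∑ f : Fin n → MStep,
    if (∀ i, 0 ≤ mht f i) ∧ mht f n = (k : ℤ)
    then mweight B (fun _ => 1) f else 0

lemma mu_zero (k : ℕ) : mu 0 k = if k = 0 then 1 else 0 := by
  classical
  unfold mu
  rw [Fintype.sum_eq_single (fun i : Fin 0 => MStep.up)]
  · have h0 : ∀ i, mht (fun _ : Fin 0 => MStep.up) i = 0 := by
      intro i; rw [mht_eq]; simp
    by_cases hk : k = 0
    · subst hk; rw [if_pos ⟨fun i => le_of_eq (h0 i).symm, by simp [h0]⟩, if_pos rfl]
      unfold mweight; simp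
    · rw [if_neg, if_neg hk]
      rintro ⟨-, h⟩
      rw [h0] at h
      exact hk (by exact_mod_cast h.symm)
  · intro f hf
    exact absurd (funext fun i => absurd i.isLt (by omega)) hf

lemma sum_MStep {M : Type*} [AddCommMonoid M] (h : MStep → M) :
    ∑ s : MStep, h s = h .up + h .down + h .flat := by
  have huniv : (Finset.univ : Finset MStep) = {MStep.up, MStep.down, MStep.flat} := by decide
  rw [huniv]
  rw [show ({MStep.up, MStep.down, MStep.flat} : Finset MStep)
      = insert MStep.up (insert MStep.down {MStep.flat}) from rfl]
  rw [Finset.sum_insert (by decide), Finset.sum_insert (by decide), Finset.sum_singleton,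
    add_assoc]

lemma mu_succ (n k : ℕ) :
    mu (n+1) k = (if k = 0 then 0 else mu n (k-1)) + B k * mu n k + mu n (k+1) := by
  classical
  let e : (Fin n → MStep) × MStep ≃ (Fin (n+1) → MStep) :=
    { toFun := fun p => Fin.snoc p.1 p.2
      invFun := fun f => (Fin.init f, f (Fin.last n))
      left_inv := fun p => by simp
      right_inv := fun f => by simp [Fin.snoc_init_self] }
  have reidx : mu (n+1) k = ∑ p : (Fin n → MStep) × MStep,
      (if (∀ i, 0 ≤ mht (Fin.snoc p.1 p.2) i) ∧ mht (Fin.snoc p.1 p.2) (n+1) = (k : ℤ)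
       then mweight B (fun _ => 1) (Fin.snoc p.1 p.2) else 0) := by
    unfold mu
    exact (Equiv.sum_comp e _).symm
  rw [reidx, Fintype.sum_prod_type]
  have key : ∀ g : Fin n → MStep,
      (∑ s : MStep,
        if (∀ i, 0 ≤ mht (Fin.snoc g s) i) ∧ mht (Fin.snoc g s) (n+1) = (k : ℤ)
        then mweight B (fun _ => 1) (Fin.snoc g s) else 0)
      = (if k = 0 then 0 else
          (if (∀ i, 0 ≤ mht g i) ∧ mht g n = ((k-1 : ℕ) : ℤ)
           then mweight B (fun _ => 1) g else 0))
        + B k * (if (∀ i, 0 ≤ mht g i) ∧ mht g n = (k : ℤ)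
           then mweight B (fun _ => 1) g else 0)
        + (if (∀ i, 0 ≤ mht g i) ∧ mht g n = ((k+1 : ℕ) : ℤ)
           then mweight B (fun _ => 1) g else 0) := by
    intro g
    have hup : (if (∀ i, 0 ≤ mht (Fin.snoc g .up) i) ∧ mht (Fin.snoc g .up) (n+1) = (k : ℤ)
        then mweight B (fun _ => 1) (Fin.snoc g .up) else 0)
        = (if k = 0 then 0 else
          (if (∀ i, 0 ≤ mht g i) ∧ mht g n = ((k-1 : ℕ) : ℤ)
           then mweight B (fun _ => 1) g else 0)) := by
      by_cases hk : k = 0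
      · subst hk
        rw [if_pos rfl, if_neg]
        rintro ⟨h1, h2⟩
        rw [nonneg_snoc_iff] at h1
        rw [mht_snoc_top] at h2
        have := h1.1 n
        simp only [sval] at h2
        omega
      · rw [if_neg hk]
        have hiff : ((∀ i, 0 ≤ mht (Fin.snoc g .up) i) ∧ mht (Fin.snoc g .up) (n+1) = (k : ℤ))
            ↔ ((∀ i, 0 ≤ mht g i) ∧ mht g n = ((k-1 : ℕ) : ℤ)) := by
          rw [nonneg_snoc_iff, mht_snoc_top]
          have hc : ((k-1 : ℕ) : ℤ) = (k : ℤ) - 1 := by omega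
          rw [hc]
          simp only [sval]
          constructor
          · rintro ⟨⟨hg, -⟩, h2⟩
            exact ⟨hg, by omega⟩
          · rintro ⟨hg, h2⟩
            refine ⟨⟨hg, ?_⟩, by omega⟩
            have := hg n; omega
        rw [if_congr hiff rfl rfl]
        by_cases hq : (∀ i, 0 ≤ mht g i) ∧ mht g n = ((k-1 : ℕ) : ℤ)
        · rw [if_pos hq, if_pos hq, mweight_snoc]; simp
        · rw [if_neg hq, if_neg hq]
    have hdown : (if (∀ i, 0 ≤ mht (Fin.snoc g .down) i) ∧ mht (Fin.snoc g .down) (n+1) = (k : ℤ)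
        then mweight B (fun _ => 1) (Fin.snoc g .down) else 0)
        = (if (∀ i, 0 ≤ mht g i) ∧ mht g n = ((k+1 : ℕ) : ℤ)
           then mweight B (fun _ => 1) g else 0) := by
      have hiff : ((∀ i, 0 ≤ mht (Fin.snoc g .down) i) ∧ mht (Fin.snoc g .down) (n+1) = (k : ℤ))
          ↔ ((∀ i, 0 ≤ mht g i) ∧ mht g n = ((k+1 : ℕ) : ℤ)) := by
        rw [nonneg_snoc_iff, mht_snoc_top]
        simp only [sval]
        push_cast
        constructor
        · rintro ⟨⟨hg, -⟩, h2⟩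
          exact ⟨hg, by omega⟩
        · rintro ⟨hg, h2⟩
          exact ⟨⟨hg, by omega⟩, by omega⟩
      rw [if_congr hiff rfl rfl]
      by_cases hq : (∀ i, 0 ≤ mht g i) ∧ mht g n = ((k+1 : ℕ) : ℤ)
      · rw [if_pos hq, if_pos hq, mweight_snoc]; simp
      · rw [if_neg hq, if_neg hq]
    have hflat : (if (∀ i, 0 ≤ mht (Fin.snoc g .flat) i) ∧ mht (Fin.snoc g .flat) (n+1) = (k : ℤ)
        then mweight B (fun _ => 1) (Fin.snoc g .flat) else 0)
        = B k * (if (∀ i, 0 ≤ mht g i) ∧ mht g n = (k : ℤ)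
           then mweight B (fun _ => 1) g else 0) := by
      have hiff : ((∀ i, 0 ≤ mht (Fin.snoc g .flat) i) ∧ mht (Fin.snoc g .flat) (n+1) = (k : ℤ))
          ↔ ((∀ i, 0 ≤ mht g i) ∧ mht g n = (k : ℤ)) := by
        rw [nonneg_snoc_iff, mht_snoc_top]
        simp only [sval]
        constructor
        · rintro ⟨⟨hg, -⟩, h2⟩
          exact ⟨hg, by omega⟩
        · rintro ⟨hg, h2⟩
          exact ⟨⟨hg, by omega⟩, by omega⟩
      rw [if_congr hiff rfl rfl]
      by_cases hq : (∀ i, 0 ≤ mht g i) ∧ mht g n = (k : ℤ)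
      · rw [if_pos hq, if_pos hq, mweight_snoc]
        have ht : (mht g n).toNat = k := by
          rw [hq.2]; exact Int.toNat_natCast k
        rw [ht]
        ring
      · rw [if_neg hq, if_neg hq, mul_zero]
    rw [sum_MStep, hup, hdown, hflat]
    ring
  rw [Finset.sum_congr rfl fun g _ => key g, Finset.sum_add_distrib, Finset.sum_add_distrib,
    ← Finset.mul_sum]
  have t1 : (∑ g : Fin n → MStep, if k = 0 then 0 else
      (if (∀ i, 0 ≤ mht g i) ∧ mht g n = ((k-1 : ℕ) : ℤ) then mweight B (fun _ => 1) g else 0))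
      = (if k = 0 then 0 else mu n (k-1)) := by
    by_cases hk : k = 0
    · simp [hk]
    · simp only [if_neg hk]
      rfl
  rw [t1]
  rfl

lemma mu_add_choose (n : ℕ) : ∀ k,
    mu n k + Nat.choose (2*n) (n+k+1) = Nat.choose (2*n) (n+k) := by
  induction n with
  | zero =>
    intro k
    rw [mu_zero]
    cases k with
    | zero => simp
    | succ j => simp [Nat.choose_eq_zero_of_lt]
  | succ n ih =>
    intro k
    have hkey := mu_succ n k
    cases k with
    | zero =>
      have h0 := ih 0
      have h1 := ih 1
      simp only [Nat.add_zero] at h0 ⊢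
      have hsym : Nat.choose (2*n+1) n = Nat.choose (2*n+1) (n+1) := by
        have h := Nat.choose_symm (show n+1 ≤ 2*n+1 by omega)
        rw [show 2*n+1-(n+1) = n by omega] at h
        exact h
      have p1 : Nat.choose (2*(n+1)) (n+1+1) = Nat.choose (2*n+1) (n+1) + Nat.choose (2*n+1) (n+1+1) := by
        rw [show 2*(n+1) = (2*n+1)+1 by ring]
        exact Nat.choose_succ_succ' (2*n+1) (n+1)
      have p2 : Nat.choose (2*(n+1)) (n+1) = Nat.choose (2*n+1) n + Nat.choose (2*n+1) (n+1) := by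
        rw [show 2*(n+1) = (2*n+1)+1 by ring]
        exact Nat.choose_succ_succ' (2*n+1) n
      have p3 : Nat.choose (2*n+1) (n+1) = Nat.choose (2*n) n + Nat.choose (2*n) (n+1) :=
        Nat.choose_succ_succ' (2*n) n
      have p4 : Nat.choose (2*n+1) (n+1+1) = Nat.choose (2*n) (n+1) + Nat.choose (2*n) (n+1+1) :=
        Nat.choose_succ_succ' (2*n) (n+1)
      have hb : B 0 = 1 := rfl
      rw [hb, one_mul, if_pos rfl] at hkey
      simp only [Nat.zero_add] at hkey
      have h1' : mu n 1 + Nat.choose (2*n) (n+1+1) = Nat.choose (2*n) (n+1) := ih 1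
      omega
    | succ j =>
      have h0 := ih j
      have h1 := ih (j+1)
      have h2 := ih (j+2)
      rw [show n+(j+1)+1 = n+j+2 by ring, show n+(j+1) = n+j+1 by ring] at h1
      rw [show n+(j+2)+1 = n+j+3 by ring, show n+(j+2) = n+j+2 by ring] at h2
      have hb : B (j+1) = 2 := by simp [B]
      rw [hb, if_neg (Nat.succ_ne_zero j), Nat.succ_sub_one,
        show j+1+1 = j+2 by ring] at hkey
      have p1 : Nat.choose (2*(n+1)) (n+1+(j+1)+1) =
          Nat.choose (2*n) (n+j+1) + 2 * Nat.choose (2*n) (n+j+2) + Nat.choose (2*n) (n+j+3) := by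
        rw [show 2*(n+1) = (2*n+1)+1 by ring, show n+1+(j+1)+1 = (n+j+2)+1 by ring,
          Nat.choose_succ_succ' (2*n+1) (n+j+2),
          show (2*n+1 : ℕ) = (2*n)+1 from rfl, show (n+j+2 : ℕ) = (n+j+1)+1 by ring,
          Nat.choose_succ_succ' (2*n) (n+j+1),
          show (n+j+1)+1+1 = (n+j+2)+1 by ring,
          Nat.choose_succ_succ' (2*n) (n+j+2)]
        ring_nf
      have p2 : Nat.choose (2*(n+1)) (n+1+(j+1)) =
          Nat.choose (2*n) (n+j) + 2 * Nat.choose (2*n) (n+j+1) + Nat.choose (2*n) (n+j+2) := by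
        rw [show 2*(n+1) = (2*n+1)+1 by ring, show n+1+(j+1) = (n+j+1)+1 by ring,
          Nat.choose_succ_succ' (2*n+1) (n+j+1),
          show (2*n+1 : ℕ) = (2*n)+1 from rfl, show (n+j+1 : ℕ) = (n+j)+1 by ring,
          Nat.choose_succ_succ' (2*n) (n+j),
          show (n+j)+1+1 = (n+j+1)+1 by ring,
          Nat.choose_succ_succ' (2*n) (n+j+1)]
        ring_nf
      omega

lemma moment_eq_mu (n : ℕ) :
    moment B (fun _ => 1) n = mu n 0 := by
  classical
  unfold moment mu
  rw [Finset.sum_filter]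
  refine Finset.sum_congr rfl fun f _ => ?_
  refine if_congr ?_ rfl rfl
  unfold IsMotzkinPath
  simp

end MotzkinAux

/-- Weighted Motzkin paths of length `n` with horizontal weights `b₀ = 1`,
`bₖ = 2` for `k ≥ 1`, and down-step weights `λₖ = 1`, have total weight the
Catalan number `Cₙ`. -/
theorem motzkin_weighted_eq_catalan (n : ℕ) :
    moment (fun k => if k = 0 then 1 else 2) (fun _ => 1) n = catalan n := by
  have hm : moment (fun k => if k = 0 then 1 else 2) (fun _ => 1) n = mu n 0 := moment_eq_mu n
  rw [hm]
  have h := mu_add_choose n 0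
  simp only [Nat.add_zero] at h
  have h2 : Nat.choose (2*n) (n+1) * (n+1) = Nat.choose (2*n) n * n := by
    have := Nat.choose_succ_right_eq (2*n) n
    rwa [show 2*n-n = n by omega] at this
  have h3 : (n + 1) * catalan n = Nat.centralBinom n := succ_mul_catalan_eq_centralBinom n
  have h4 : Nat.centralBinom n = Nat.choose (2*n) n := rfl
  have key : (n+1) * mu n 0 = Nat.choose (2*n) n := by
    have e1 : (n+1) * mu n 0 + (n+1) * Nat.choose (2*n) (n+1) = (n+1) * Nat.choose (2*n) n := by
      rw [← Nat.mul_add, h]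
    have e2 : (n+1) * Nat.choose (2*n) (n+1) = n * Nat.choose (2*n) n := by
      rw [Nat.mul_comm, h2, Nat.mul_comm]
    rw [e2] at e1
    have e3 : (n+1) * Nat.choose (2*n) n = Nat.choose (2*n) n + n * Nat.choose (2*n) n := by ring
    omega
  have : (n+1) * mu n 0 = (n+1) * catalan n := by rw [key, h3, h4]
  exact Nat.eq_of_mul_eq_mul_left (Nat.succ_pos n) this
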